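/- Let ψ be a permutation-symmetric state of n qudits stabilized by an invertible matrix B (meaning B_{(1)}ψ ∈ S), and let V_1,…,V_p be the generalized eigenspaces of B for its distinct eigenvalues. Then ψ ∈ ⊕_{i=1}^p Sym^n(V_i); that is, ψ contains no term mixing vectors from generalized eigenspaces of different eigenvalues. -/

import Mathlib

open Matrix BigOperators Polynomial

/-- Permutation symmetry of an `n`-qudit state represented by its amplitudes. -/
def PSym {n d : ℕ} (ψ : (Fin n → Fin d) → ℂ) : Prop :=
  ∀ σ : Equiv.Perm (Fin n), ∀ x : Fin n → Fin d, ψ (x ∘ σ) = ψ x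

/-- The operator `B` acting on the `k`-th tensor factor (identity elsewhere). -/
noncomputable def appAt {n d : ℕ} (k : Fin n) (B : Matrix (Fin d) (Fin d) ℂ)
    (ψ : (Fin n → Fin d) → ℂ) : (Fin n → Fin d) → ℂ :=
  fun x => ∑ j : Fin d, B (x k) j * ψ (Function.update x k j)

/-- The operator `A 1 ⊗ A 2 ⊗ ⋯ ⊗ A n` acting on an `n`-qudit state. -/
noncomputable def appAll {n d : ℕ} (A : Fin n → Matrix (Fin d) (Fin d) ℂ)
    (ψ : (Fin n → Fin d) → ℂ) : (Fin n → Fin d) → ℂ :=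
  fun x => ∑ y : Fin n → Fin d, (∏ k, A k (x k) (y k)) * ψ y

namespace Aux

variable {n d : ℕ}

lemma sum_prod_pi (f : Fin n → Fin d → ℂ) :
    ∑ y : Fin n → Fin d, ∏ k, f k (y k) = ∏ k, ∑ j, f k j :=
  (Fintype.prod_sum f).symm

lemma appAll_appAll (A A' : Fin n → Matrix (Fin d) (Fin d) ℂ) (ψ : (Fin n → Fin d) → ℂ) :
    appAll A (appAll A' ψ) = appAll (fun k => A k * A' k) ψ := by
  funext x
  simp only [appAll, Finset.mul_sum]
  rw [Finset.sum_comm]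
  refine Finset.sum_congr rfl fun z _ => ?_
  simp_rw [← mul_assoc, ← Finset.sum_mul]
  congr 1
  have : ∀ y : Fin n → Fin d,
      (∏ k, A k (x k) (y k)) * ∏ k, A' k (y k) (z k)
        = ∏ k, (A k (x k) (y k) * A' k (y k) (z k)) := fun y => by
    rw [← Finset.prod_mul_distrib]
  simp_rw [this]
  rw [sum_prod_pi (f := fun k j => A k (x k) j * A' k j (z k))]
  refine Finset.prod_congr rfl fun k _ => ?_
  rw [Matrix.mul_apply]

lemma prod_one_apply (x y : Fin n → Fin d) :
    (∏ k, (1 : Matrix (Fin d) (Fin d) ℂ) (x k) (y k)) = if x = y then 1 else 0 := by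
  simp only [Matrix.one_apply]
  rw [Finset.prod_boole]
  simp [funext_iff]

lemma appAll_one (ψ : (Fin n → Fin d) → ℂ) :
    appAll (fun _ => (1 : Matrix (Fin d) (Fin d) ℂ)) ψ = ψ := by
  funext x
  simp only [appAll, prod_one_apply]
  simp

lemma appAll_zero_slot (A : Fin n → Matrix (Fin d) (Fin d) ℂ) (j : Fin n) (hA : A j = 0)
    (ψ : (Fin n → Fin d) → ℂ) : appAll A ψ = 0 := by
  funext x
  simp only [appAll]
  refine Finset.sum_eq_zero fun y _ => ?_
  rw [Finset.prod_eq_zero (Finset.mem_univ j) (by simp [hA]), zero_mul]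

end Aux

namespace Aux
variable {n d : ℕ}

lemma appAt_eq_appAll (k : Fin n) (M : Matrix (Fin d) (Fin d) ℂ) (ψ : (Fin n → Fin d) → ℂ) :
    appAt k M ψ = appAll (fun l => if l = k then M else 1) ψ := by
  funext x
  simp only [appAt, appAll]
  rw [← (Equiv.funSplitAt k (Fin d)).symm.sum_comp
    (fun y => (∏ l, (if l = k then M else 1) (x l) (y l)) * ψ y)]
  rw [Fintype.sum_prod_type]
  refine Finset.sum_congr rfl fun a _ => ?_
  have key : ∀ r : {j // j ≠ k} → Fin d, ∀ l,
      (Equiv.funSplitAt k (Fin d)).symm (a, r) l = if h : l = k then a else r ⟨l, h⟩ := by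
    intro r l
    rcases eq_or_ne l k with h | h
    · subst h; simp
    · simp [h]
  have key2 : ∀ r : {j // j ≠ k} → Fin d, ∀ l : {j // j ≠ k},
      (Equiv.funSplitAt k (Fin d)).symm (a, r) ↑l = r l := by
    intro r l; rw [key]; simp [l.2]
  have hsplit : ∀ r : {j // j ≠ k} → Fin d,
      (∏ l, (if l = k then M else 1) (x l) (((Equiv.funSplitAt k (Fin d)).symm (a, r)) l))
        = M (x k) a * ∏ l : {j // j ≠ k}, (1 : Matrix (Fin d) (Fin d) ℂ) (x l) (r l) := by
    intro r
    rw [← Finset.mul_prod_erase Finset.univ _ (Finset.mem_univ k)]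
    congr 1
    · rw [key]; simp
    · rw [Finset.prod_subtype (p := fun l => l ≠ k) (Finset.univ.erase k)
        (fun l => by simp [Finset.mem_erase])
        (fun l => (if l = k then M else 1) (x l) (((Equiv.funSplitAt k (Fin d)).symm (a, r)) l))]
      refine Finset.prod_congr rfl fun l _ => ?_
      have hl : (l : Fin n) ≠ k := l.2
      rw [key2]
      simp [hl]
  simp_rw [hsplit, Matrix.one_apply, Finset.prod_boole]
  have hcond : ∀ r : {j // j ≠ k} → Fin d,
      ((∀ i ∈ (Finset.univ : Finset {j // j ≠ k}), x ↑i = r i) ↔ r = fun i : {j // j ≠ k} => x ↑i) := by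
    intro r; rw [funext_iff]
    exact ⟨fun h i => (h i (Finset.mem_univ i)).symm, fun h i _ => (h i).symm⟩
  simp_rw [hcond]
  simp only [mul_ite, mul_one, mul_zero, ite_mul, zero_mul]
  rw [Finset.sum_ite_eq' Finset.univ]
  simp only [Finset.mem_univ, if_true]
  have heq : (Equiv.funSplitAt k (Fin d)).symm (a, fun i : {j // j ≠ k} => x ↑i)
      = Function.update x k a := by
    funext l
    rw [key]
    rcases eq_or_ne l k with h | h
    · subst h; simp
    · simp [h, Function.update_of_ne h]
  rw [heq]

end Aux

namespace Aux
variable {n d : ℕ}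

/-- `appAll` as a linear endomorphism. -/
noncomputable def appAllL (A : Fin n → Matrix (Fin d) (Fin d) ℂ) :
    Module.End ℂ ((Fin n → Fin d) → ℂ) where
  toFun := appAll A
  map_add' ψ ψ' := by
    funext x
    simp [appAll, mul_add, Finset.sum_add_distrib]
  map_smul' c ψ := by
    funext x
    simp [appAll, Finset.mul_sum, mul_left_comm c]

@[simp] lemma appAllL_apply (A : Fin n → Matrix (Fin d) (Fin d) ℂ) (ψ : (Fin n → Fin d) → ℂ) :
    appAllL A ψ = appAll A ψ := rfl

/-- operator at a single slot -/
noncomputable def lop (i : Fin n) (M : Matrix (Fin d) (Fin d) ℂ) :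
    Module.End ℂ ((Fin n → Fin d) → ℂ) :=
  appAllL (fun l => if l = i then M else 1)

lemma appAllL_appAllL (A A' : Fin n → Matrix (Fin d) (Fin d) ℂ) (ψ : (Fin n → Fin d) → ℂ) :
    appAllL A (appAllL A' ψ) = appAllL (fun k => A k * A' k) ψ := by
  simp only [appAllL_apply]; rw [appAll_appAll]

lemma lop_apply_appAllL (i : Fin n) (M : Matrix (Fin d) (Fin d) ℂ)
    (A : Fin n → Matrix (Fin d) (Fin d) ℂ) (ψ : (Fin n → Fin d) → ℂ) :
    lop i M (appAllL A ψ) = appAllL (fun l => (if l = i then M else 1) * A l) ψ := by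
  simp only [lop, appAllL_apply]
  rw [appAll_appAll]

lemma appAllL_lop (i : Fin n) (M : Matrix (Fin d) (Fin d) ℂ)
    (A : Fin n → Matrix (Fin d) (Fin d) ℂ) (ψ : (Fin n → Fin d) → ℂ) :
    appAllL A (lop i M ψ) = appAllL (fun l => A l * (if l = i then M else 1)) ψ := by
  simp only [lop, appAllL_apply]
  rw [appAll_appAll]

lemma lop_mul (i : Fin n) (M M' : Matrix (Fin d) (Fin d) ℂ) :
    lop i M * lop i M' = lop i (M * M') := by
  refine LinearMap.ext fun ψ => ?_
  rw [Module.End.mul_apply]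
  simp only [lop]
  rw [appAllL_appAllL]
  have hA : (fun k => (if k = i then M else 1) * if k = i then M' else 1)
      = fun l : Fin n => if l = i then M * M' else 1 := by
    funext l
    rcases eq_or_ne l i with h | h
    · simp [h]
    · simp [h]
  rw [hA]

lemma lop_one (i : Fin n) : lop i (1 : Matrix (Fin d) (Fin d) ℂ) = 1 := by
  refine LinearMap.ext fun ψ => ?_
  have : (fun l : Fin n => if l = i then (1 : Matrix (Fin d) (Fin d) ℂ) else 1)
      = fun _ => 1 := by funext l; split_ifs <;> rfl
  simp only [lop, appAllL_apply, this, appAll_one, Module.End.one_apply]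

lemma lop_pow (i : Fin n) (M : Matrix (Fin d) (Fin d) ℂ) (p : ℕ) :
    (lop i M) ^ p = lop i (M ^ p) := by
  induction p with
  | zero => simp [lop_one]
  | succ p ih => rw [pow_succ, pow_succ, ih, lop_mul]

lemma lop_comm (i j : Fin n) (h : i ≠ j) (M M' : Matrix (Fin d) (Fin d) ℂ) :
    Commute (lop i M) (lop j M') := by
  unfold Commute SemiconjBy
  refine LinearMap.ext fun ψ => ?_
  rw [Module.End.mul_apply, Module.End.mul_apply]
  simp only [lop]
  rw [appAllL_appAllL, appAllL_appAllL]
  have hA : (fun k => (if k = i then M else 1) * if k = j then M' else 1)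
      = fun k : Fin n => (if k = j then M' else 1) * if k = i then M else 1 := by
    funext l
    rcases eq_or_ne l i with hi | hi <;> rcases eq_or_ne l j with hj | hj
    · exact absurd (hi ▸ hj : i = j) h
    all_goals simp [hi, hj, h, h.symm]
  rw [hA]

end Aux

namespace Aux
variable {n d : ℕ}

lemma prod_slot_factor (i : Fin n) (M : Matrix (Fin d) (Fin d) ℂ) (x y : Fin n → Fin d) :
    (∏ l, (if l = i then M else 1) (x l) (y l))
      = M (x i) (y i) * ∏ l ∈ Finset.univ.erase i, (1 : Matrix (Fin d) (Fin d) ℂ) (x l) (y l) := by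
  rw [← Finset.mul_prod_erase Finset.univ _ (Finset.mem_univ i)]
  congr 1
  · simp
  · refine Finset.prod_congr rfl fun l hl => ?_
    have h := (Finset.mem_erase.mp hl).1
    simp [h]

lemma lop_add (i : Fin n) (M M' : Matrix (Fin d) (Fin d) ℂ) :
    lop i (M + M') = lop i M + lop i M' := by
  refine LinearMap.ext fun ψ => ?_
  funext x
  simp only [lop, appAllL_apply, LinearMap.add_apply, Pi.add_apply, appAll]
  simp_rw [prod_slot_factor, Matrix.add_apply, add_mul, ← Finset.sum_add_distrib]

lemma lop_smul (i : Fin n) (c : ℂ) (M : Matrix (Fin d) (Fin d) ℂ) :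
    lop i (c • M) = c • lop i M := by
  refine LinearMap.ext fun ψ => ?_
  funext x
  simp only [lop, appAllL_apply, LinearMap.smul_apply, Pi.smul_apply, appAll, smul_eq_mul,
    Finset.mul_sum]
  simp_rw [prod_slot_factor, Matrix.smul_apply, smul_eq_mul]
  ring_nf

lemma lop_sub_smul_one (i : Fin n) (M : Matrix (Fin d) (Fin d) ℂ) (μ : ℂ) :
    lop i (M - μ • 1) = lop i M - μ • 1 := by
  have h1 : M - μ • 1 = M + (-μ) • (1 : Matrix (Fin d) (Fin d) ℂ) := by
    rw [neg_smul, ← sub_eq_add_neg]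
  rw [h1, lop_add, lop_smul, lop_one, sub_eq_add_neg]
  congr 1
  exact neg_smul μ (1 : Module.End ℂ ((Fin n → Fin d) → ℂ))

end Aux

namespace Aux
variable {n d : ℕ}

set_option maxHeartbeats 2000000 in
set_option synthInstance.maxHeartbeats 400000 in
lemma component_zero (B : Matrix (Fin d) (Fin d) ℂ) (ψ : (Fin n → Fin d) → ℂ)
    (j k : Fin n) (hjk : j ≠ k) (μ ν : ℂ) (hμν : μ ≠ ν)
    (Q : Fin n → Matrix (Fin d) (Fin d) ℂ)
    (hQB : ∀ l, B * Q l = Q l * B)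
    (hQj : (B - μ • 1) ^ d * Q j = 0)
    (hQk : (B - ν • 1) ^ d * Q k = 0)
    (hsym : lop j B ψ = lop k B ψ) :
    appAllL Q ψ = 0 := by
  set φ := appAllL Q ψ with hφ
  -- commutation of lop with appAllL Q
  have hcomm : ∀ i : Fin n, ∀ p : ℕ, lop i B φ = appAllL Q (lop i B ψ) := by
    intro i p
    rw [hφ, lop_apply_appAllL, appAllL_lop]
    have hA : (fun l => (if l = i then B else 1) * Q l)
        = fun l => Q l * if l = i then B else 1 := by
      funext l
      rcases eq_or_ne l i with h | h
      · simp only [h, if_pos rfl]; exact hQB i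
      · simp [h]
    rw [hA]
  have h1 : lop j B φ = lop k B φ := by
    rw [hcomm j 0, hcomm k 0, hsym]
  set N₁ := lop j (B - μ • 1) with hN₁
  set N₂ := lop k (B - ν • 1) with hN₂
  have h2 : (N₁ - N₂) φ = (ν - μ) • φ := by
    rw [LinearMap.sub_apply, hN₁, hN₂, lop_sub_smul_one, lop_sub_smul_one,
      LinearMap.sub_apply, LinearMap.sub_apply, h1]
    simp only [LinearMap.smul_apply, Module.End.one_apply, sub_smul]
    abel
  have h3 : ∀ m : ℕ, ((N₁ - N₂) ^ m) φ = (ν - μ) ^ m • φ := by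
    intro m
    induction m with
    | zero => simp
    | succ m ih =>
      rw [pow_succ, Module.End.mul_apply, h2, LinearMap.map_smul, ih, pow_succ, smul_smul, mul_comm]
  -- vanishing of the terms
  have hN2pow : ∀ q : ℕ, (N₂ ^ q) φ
      = appAllL (fun l => (if l = k then (B - ν • 1) ^ q else 1) * Q l) ψ := by
    intro q
    rw [hN₂, lop_pow, hφ, lop_apply_appAllL]
  have hN2zero : ∀ q : ℕ, d ≤ q → (N₂ ^ q) φ = 0 := by
    intro q hq
    rw [hN2pow q]
    simp only [appAllL_apply]
    refine appAll_zero_slot _ k ?_ ψ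
    rw [if_pos rfl, ← Nat.sub_add_cancel hq, pow_add, mul_assoc, hQk, mul_zero]
  have hN12zero : ∀ i q : ℕ, d ≤ i → (N₁ ^ i) ((N₂ ^ q) φ) = 0 := by
    intro i q hi
    rw [hN2pow q, hN₁, lop_pow, lop_apply_appAllL]
    simp only [appAllL_apply]
    refine appAll_zero_slot _ j ?_ ψ
    rw [if_pos rfl, if_neg hjk, one_mul, ← Nat.sub_add_cancel hi, pow_add, mul_assoc, hQj,
      mul_zero]
  -- binomial expansion
  have hc : Commute N₁ (-N₂) := by
    have h0 : Commute N₁ N₂ := lop_comm j k hjk (B - μ • 1) (B - ν • 1)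
    exact h0.neg_right
  have hexp := hc.add_pow (2 * d)
  have key : (ν - μ) ^ (2 * d) • φ = 0 := by
    rw [← h3 (2 * d)]
    have : N₁ - N₂ = N₁ + -N₂ := by abel
    rw [this, hexp]
    rw [LinearMap.sum_apply]
    refine Finset.sum_eq_zero fun i _ => ?_
    have hneg : (-N₂) ^ (2 * d - i) = ((-1 : ℂ) ^ (2 * d - i)) • N₂ ^ (2 * d - i) := by
      rw [← neg_one_smul ℂ N₂, _root_.smul_pow]
    rw [Module.End.mul_apply, Module.End.natCast_apply, map_nsmul, Module.End.mul_apply, hneg,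
      LinearMap.smul_apply, LinearMap.map_smul]
    rcases le_or_gt d (2 * d - i) with hq | hq
    · rw [hN2zero _ hq]
      simp
    · have hi : d ≤ i := by omega
      rw [hN12zero i _ hi]
      simp
  have hc0 : (ν - μ) ^ (2 * d) ≠ 0 := pow_ne_zero _ (sub_ne_zero.mpr (Ne.symm hμν))
  have := smul_eq_zero.mp key
  rcases this with h | h
  · exact absurd h hc0
  · exact h

end Aux

namespace Aux
variable {d : ℕ}

lemma eval_charpoly_eq_det (B : Matrix (Fin d) (Fin d) ℂ) (μ : ℂ) :
    (B.charpoly).eval μ = (μ • 1 - B).det := by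
  rw [Matrix.charpoly, ← Polynomial.coe_evalRingHom, RingHom.map_det]
  congr 1
  ext i j
  simp only [RingHom.mapMatrix_apply, Matrix.map_apply, charmatrix_apply, coe_evalRingHom,
    Matrix.sub_apply, Matrix.diagonal_apply, Matrix.smul_apply, Matrix.one_apply, eval_sub,
    eval_C]
  rcases eq_or_ne i j with h | h
  · simp [h]
  · simp [h]

lemma root_mem_spectrum (B : Matrix (Fin d) (Fin d) ℂ) (μ : ℂ)
    (h : (B.charpoly).IsRoot μ) : μ ∈ spectrum ℂ B := by
  rw [spectrum.mem_iff]
  intro hu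
  rw [Matrix.isUnit_iff_isUnit_det] at hu
  have halg : (algebraMap ℂ (Matrix (Fin d) (Fin d) ℂ)) μ = μ • 1 := by
    rw [Algebra.algebraMap_eq_smul_one]
  rw [halg] at hu
  rw [Polynomial.IsRoot, eval_charpoly_eq_det] at h
  rw [h] at hu
  simp at hu

lemma aeval_comm (B : Matrix (Fin d) (Fin d) ℂ) (p q : ℂ[X]) :
    aeval B p * aeval B q = aeval B q * aeval B p := by
  rw [← _root_.map_mul, mul_comm, _root_.map_mul]

lemma exists_projections (hd : 0 < d) (B : Matrix (Fin d) (Fin d) ℂ) :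
    ∃ (R : Finset ℂ) (P : ℂ → Matrix (Fin d) (Fin d) ℂ),
      (∀ μ ∈ R, μ ∈ spectrum ℂ B) ∧
      (∀ μ ∈ R, (B - μ • 1) ^ d * P μ = 0) ∧
      (∀ μ, B * P μ = P μ * B) ∧
      (∑ μ ∈ R, P μ) = 1 := by
  classical
  set χ := B.charpoly with hχ
  have hmonic : χ.Monic := B.charpoly_monic
  have hχ0 : χ ≠ 0 := hmonic.ne_zero
  have hdeg : χ.natDegree = d := by
    rw [hχ, Matrix.charpoly_natDegree_eq_dim, Fintype.card_fin]
  set R : Finset ℂ := χ.roots.toFinset with hR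
  set f : ℂ → ℂ[X] := fun μ => χ /ₘ (X - C μ) ^ (χ.rootMultiplicity μ) with hf
  have hfac : ∀ μ : ℂ, (X - C μ) ^ (χ.rootMultiplicity μ) * f μ = χ := fun μ =>
    Polynomial.pow_mul_divByMonic_rootMultiplicity_eq χ μ
  have hfne : ∀ μ : ℂ, f μ ≠ 0 := by
    intro μ hf0
    have h := hfac μ
    rw [hf0, mul_zero] at h
    exact hχ0 h.symm
  -- Bezout
  have hR_nonempty : R.Nonempty := by
    have : χ.degree ≠ 0 := by
      rw [Polynomial.degree_eq_natDegree hχ0, hdeg]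
      exact_mod_cast Nat.pos_iff_ne_zero.mp hd
    obtain ⟨z, hz⟩ := Complex.isAlgClosed.exists_root χ this
    exact ⟨z, by rw [hR, Multiset.mem_toFinset, Polynomial.mem_roots hχ0]; exact hz⟩
  have hone : (1 : ℂ[X]) ∈ Ideal.span (Set.range fun μ : R => f ↑μ) := by
    set I := Ideal.span (Set.range fun μ : R => f ↑μ) with hI
    obtain ⟨g, hg⟩ := (IsPrincipalIdealRing.principal I).principal
    have hgf : ∀ μ : R, g ∣ f ↑μ := by
      intro μ
      have hm : f ↑μ ∈ I := Ideal.subset_span ⟨μ, rfl⟩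
      rw [hg] at hm
      exact Ideal.mem_span_singleton.mp hm
    obtain ⟨μ₀, hμ₀⟩ := hR_nonempty
    have hg0 : g ≠ 0 := by
      intro h0
      exact hfne μ₀ (by simpa [h0] using hgf ⟨μ₀, hμ₀⟩)
    have hgu : IsUnit g := by
      by_contra hgu
      have hdg : g.degree ≠ 0 := fun h => hgu (Polynomial.isUnit_iff_degree_eq_zero.mpr h)
      obtain ⟨z, hz⟩ := Complex.isAlgClosed.exists_root g hdg
      -- z is a root of χ
      have hzχ : χ.IsRoot z := by
        obtain ⟨c, hc⟩ := hgf ⟨μ₀, hμ₀⟩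
        have : (X - C z) ∣ χ := by
          refine dvd_trans (Polynomial.dvd_iff_isRoot.mpr hz) ?_
          refine dvd_trans ⟨c, hc⟩ ?_
          exact Dvd.intro_left _ (hfac μ₀)
        exact Polynomial.dvd_iff_isRoot.mp this
      have hzR : z ∈ R := by
        rw [hR, Multiset.mem_toFinset, Polynomial.mem_roots hχ0]; exact hzχ
      have : (f z).IsRoot z := by
        obtain ⟨c, hc⟩ := hgf ⟨z, hzR⟩
        rw [Polynomial.IsRoot, hc, eval_mul, hz, zero_mul]
      exact Polynomial.eval_divByMonic_pow_rootMultiplicity_ne_zero z hχ0 this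
    show (1 : ℂ[X]) ∈ I
    rw [hg]
    have : Ideal.span {g} = ⊤ := Ideal.span_singleton_eq_top.mpr hgu
    rw [show Submodule.span ℂ[X] {g} = Ideal.span {g} from rfl, this]
    exact Submodule.mem_top
  rw [Ideal.span, Submodule.mem_span_range_iff_exists_fun ℂ[X]] at hone
  obtain ⟨c, hc⟩ := hone
  set cc : ℂ → ℂ[X] := fun μ => if h : μ ∈ R then c ⟨μ, h⟩ else 0 with hcc
  have hsum1 : ∑ μ ∈ R, cc μ * f μ = 1 := by
    rw [← hc, ← Finset.sum_coe_sort R (fun μ => cc μ * f μ)]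
    refine Finset.sum_congr rfl fun μ _ => ?_
    rw [hcc]
    simp only [μ.2, dif_pos, smul_eq_mul]
  refine ⟨R, fun μ => aeval B (cc μ * f μ), ?_, ?_, ?_, ?_⟩
  · intro μ hμ
    refine root_mem_spectrum B μ ?_
    have := Multiset.mem_toFinset.mp hμ
    exact (Polynomial.mem_roots hχ0).mp this
  · intro μ hμ
    set m := χ.rootMultiplicity μ with hm
    have hmle : m ≤ d := by
      rw [← hdeg]
      have h1 : ((X - C μ) ^ m).natDegree ≤ χ.natDegree :=
        Polynomial.natDegree_le_of_dvd (χ.pow_rootMultiplicity_dvd μ) hχ0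
      rwa [Polynomial.natDegree_pow, Polynomial.natDegree_X_sub_C, mul_one] at h1
    have hBμ : B - μ • 1 = aeval B (X - C μ) := by
      simp [Algebra.algebraMap_eq_smul_one]
    have hsplitpow : (X - C μ) ^ d = (X - C μ) ^ (d - m) * (X - C μ) ^ m := by
      rw [← pow_add, Nat.sub_add_cancel hmle]
    have hpoly : (X - C μ) ^ d * (cc μ * f μ)
        = ((X - C μ) ^ (d - m) * cc μ) * χ := by
      calc (X - C μ) ^ d * (cc μ * f μ)
          = ((X - C μ) ^ (d - m) * cc μ) * ((X - C μ) ^ m * f μ) := by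
            rw [hsplitpow]; ring
        _ = ((X - C μ) ^ (d - m) * cc μ) * χ := by rw [hfac μ]
    rw [hBμ, ← _root_.map_pow, ← _root_.map_mul, hpoly, _root_.map_mul, hχ,
      Matrix.aeval_self_charpoly, mul_zero]
  · intro μ
    show B * aeval B (cc μ * f μ) = aeval B (cc μ * f μ) * B
    nth_rewrite 1 [← Polynomial.aeval_X (R := ℂ) B]
    rw [aeval_comm]
    rw [Polynomial.aeval_X]
  · rw [← _root_.map_sum, hsum1, _root_.map_one]

end Aux

theorem stmt_17 {n d : ℕ} (hn : 1 ≤ n) (ψ : (Fin n → Fin d) → ℂ) (hψ : PSym ψ)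
    (B : Matrix (Fin d) (Fin d) ℂ) (hB : IsUnit B.det)
    (hstab : PSym (appAt ⟨0, by omega⟩ B ψ)) :
    ψ ∈ Submodule.span ℂ
      {φ : (Fin n → Fin d) → ℂ |
        ∃ μ ∈ spectrum ℂ B, ∃ v : Fin n → (Fin d → ℂ),
          (∀ k, ((B - μ • (1 : Matrix (Fin d) (Fin d) ℂ)) ^ d) *ᵥ v k = 0) ∧
            φ = fun x => ∏ k, v k (x k)} := by
  classical
  rcases Nat.eq_zero_or_pos d with hd0 | hd
  · subst hd0
    have hψ0 : ψ = 0 := funext fun x => (x ⟨0, by omega⟩).elim0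
    rw [hψ0]
    exact Submodule.zero_mem _
  obtain ⟨R, P, hspec, hkill, hcommB, hsum⟩ := Aux.exists_projections hd B
  set k0 : Fin n := ⟨0, by omega⟩ with hk0
  -- symmetry: the action of B on any slot agrees
  have hupdate : ∀ (σ : Equiv.Perm (Fin n)) (x : Fin n → Fin d) (i : Fin d),
      Function.update (x ∘ σ) k0 i = (Function.update x (σ k0) i) ∘ σ := by
    intro σ x i
    funext l
    rcases eq_or_ne l k0 with h | h
    · subst h; simp
    · have h2 : σ l ≠ σ k0 := fun hc => h (σ.injective hc)
      simp [Function.comp_apply, Function.update_of_ne h, Function.update_of_ne h2]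
  have hperm : ∀ (σ : Equiv.Perm (Fin n)) (x : Fin n → Fin d),
      appAt k0 B ψ (x ∘ σ) = appAt (σ k0) B ψ x := by
    intro σ x
    simp only [appAt, Function.comp_apply]
    refine Finset.sum_congr rfl fun i _ => ?_
    rw [hupdate σ x i, hψ σ]
  have hAt : ∀ k : Fin n, appAt k B ψ = appAt k0 B ψ := by
    intro k
    funext x
    have h1 := hperm (Equiv.swap k0 k) x
    rw [Equiv.swap_apply_left] at h1
    rw [← h1]
    exact hstab (Equiv.swap k0 k) x
  have hlop : ∀ j k : Fin n, Aux.lop j B ψ = Aux.lop k B ψ := by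
    have h2 : ∀ k : Fin n, Aux.lop k B ψ = appAt k B ψ := fun k => by
      rw [Aux.lop, Aux.appAllL_apply, ← Aux.appAt_eq_appAll]
    intro j k
    rw [h2 j, h2 k, hAt j, hAt k]
  -- decomposition of ψ into generalized eigenspace components
  have hdecomp : ψ = ∑ t ∈ Fintype.piFinset (fun _ : Fin n => R),
      Aux.appAllL (fun k => P (t k)) ψ := by
    funext x
    rw [Finset.sum_apply]
    simp only [Aux.appAllL_apply, appAll]
    rw [Finset.sum_comm]
    have hcollapse : ∀ y : Fin n → Fin d,
        ∑ t ∈ Fintype.piFinset (fun _ : Fin n => R), (∏ k, P (t k) (x k) (y k)) * ψ y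
          = (if x = y then 1 else 0) * ψ y := by
      intro y
      rw [← Finset.sum_mul]
      congr 1
      rw [Finset.sum_prod_piFinset R (fun k μ => P μ (x k) (y k))]
      have h3 : ∀ k : Fin n, ∑ μ ∈ R, P μ (x k) (y k)
          = (1 : Matrix (Fin d) (Fin d) ℂ) (x k) (y k) := by
        intro k
        rw [← hsum, Matrix.sum_apply]
      simp_rw [h3]
      exact Aux.prod_one_apply x y
    simp_rw [hcollapse]
    simp
  rw [hdecomp]
  refine Submodule.sum_mem _ fun t ht => ?_
  by_cases hconst : ∀ j k : Fin n, t j = t k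
  · -- constant tuple: a sum of products of generalized eigenvectors
    set μ := t k0 with hμ
    have hμR : μ ∈ R := Fintype.mem_piFinset.mp ht k0
    have hPt : (fun k : Fin n => P (t k)) = fun _ => P μ :=
      funext fun k => by rw [hconst k k0]
    rw [hPt]
    have hrepr : Aux.appAllL (fun _ : Fin n => P μ) ψ
        = ∑ y : Fin n → Fin d, ψ y • (fun x => ∏ k, P μ (x k) (y k)) := by
      funext x
      rw [Finset.sum_apply]
      simp only [Aux.appAllL_apply, appAll, Pi.smul_apply, smul_eq_mul]
      refine Finset.sum_congr rfl fun y _ => mul_comm _ _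
    rw [hrepr]
    refine Submodule.sum_mem _ fun y _ => ?_
    refine Submodule.smul_mem _ _ (Submodule.subset_span ?_)
    refine ⟨μ, hspec μ hμR, fun k => fun i => P μ i (y k), ?_, rfl⟩
    intro k
    funext i
    show ∑ l, ((B - μ • 1) ^ d) i l * P μ l (y k) = 0
    rw [← Matrix.mul_apply, hkill μ hμR]
    simp
  · -- non-constant tuple: the component vanishes
    push_neg at hconst
    obtain ⟨j, k, hμν⟩ := hconst
    have hjk : j ≠ k := fun h => hμν (congrArg t h)
    have hz := Aux.component_zero B ψ j k hjk (t j) (t k) hμν (fun l => P (t l))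
      (fun l => hcommB (t l))
      (hkill (t j) (Fintype.mem_piFinset.mp ht j))
      (hkill (t k) (Fintype.mem_piFinset.mp ht k))
      (hlop j k)
    rw [hz]
    exact Submodule.zero_mem _
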